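/- Let H be a Hilbert space, E: H₀ → H and π_*: H → H₀ bounded maps with π_* = E^* (adjoint), and let J: H → H', S: H₀ → H₀' be unitaries with relations E' ∘ S = J ∘ E, π_*' ∘ (J')^* = S'^* ∘ π_*, and S ∘ S'^* = Id (where primes denote the corresponding maps on H', H₀'). Then for any trace-class localization χ, χ₁ on H' with χ ∘ (E' π_*' − 1) ∘ χ₁ trace class, Tr[χ ∘ J ∘ (E π_* − 1) ∘ (J')^* ∘ χ₁] = Tr[χ ∘ (E' π_*' − 1) ∘ χ₁]. In particular if the right-hand side vanishes so does the left. -/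

import Mathlib

open scoped InnerProductSpace

set_option maxHeartbeats 1000000

/-- abstract form of Lemma 5.2: trace identity for intertwined
extension/push-down maps.  `E : H₀ → H`, `π_* = E^*`, and unitaries
`J : H → H'`, `S : H₀ → H₀'` satisfying `E' ∘ S = J ∘ E`,
`π_* ∘ (J')^* = (S')^* ∘ π_*'`, `S ∘ (S')^* = 1` and the functional equation
`J ∘ (J')^* = 1`.  Then for trace-class localizations `χ, χ₁` on `H'`
(trace computed in a Hilbert basis `b`),
`Tr[χ ∘ J ∘ (E π_* − 1) ∘ (J')^* ∘ χ₁] = Tr[χ ∘ (E' π_*' − 1) ∘ χ₁]`. -/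
theorem stmt_3
    {ι : Type*}
    {H H' H₀ H₀' : Type*}
    [NormedAddCommGroup H] [InnerProductSpace ℂ H] [CompleteSpace H]
    [NormedAddCommGroup H'] [InnerProductSpace ℂ H'] [CompleteSpace H']
    [NormedAddCommGroup H₀] [InnerProductSpace ℂ H₀] [CompleteSpace H₀]
    [NormedAddCommGroup H₀'] [InnerProductSpace ℂ H₀'] [CompleteSpace H₀']
    (E : H₀ →L[ℂ] H) (E' : H₀' →L[ℂ] H')
    (J J' : H →L[ℂ] H') (S S' : H₀ →L[ℂ] H₀')
    -- J and S are unitary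
    (hJ : J.adjoint ∘L J = 1 ∧ J ∘L J.adjoint = 1)
    (hS : S.adjoint ∘L S = 1 ∧ S ∘L S.adjoint = 1)
    -- intertwining relations
    (h1 : E' ∘L S = J ∘L E)
    (h2 : E.adjoint ∘L J'.adjoint = S'.adjoint ∘L E'.adjoint)
    (h3 : S ∘L S'.adjoint = 1)
    (h4 : J ∘L J'.adjoint = 1)
    -- trace-class localizations
    (χ χ₁ : H' →L[ℂ] H')
    (b : HilbertBasis ι ℂ H')
    (hTr : Summable fun i =>
      (inner ℂ ((χ ∘L ((E' ∘L E'.adjoint) - 1) ∘L χ₁) (b i)) (b i) : ℂ)) :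
    ∑' i, (inner ℂ ((χ ∘L J ∘L ((E ∘L E.adjoint) - 1) ∘L J'.adjoint ∘L χ₁) (b i)) (b i) : ℂ)
      = ∑' i, (inner ℂ ((χ ∘L ((E' ∘L E'.adjoint) - 1) ∘L χ₁) (b i)) (b i) : ℂ) := by
  have key : J ∘L ((E ∘L E.adjoint) - 1) ∘L J'.adjoint = (E' ∘L E'.adjoint) - 1 := by
    have hJE : J ∘L E ∘L E.adjoint ∘L J'.adjoint = E' ∘L E'.adjoint := by
      calc J ∘L E ∘L E.adjoint ∘L J'.adjoint
          = (J ∘L E) ∘L (E.adjoint ∘L J'.adjoint) := by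
            rw [ContinuousLinearMap.comp_assoc]
        _ = (E' ∘L S) ∘L (S'.adjoint ∘L E'.adjoint) := by rw [h1, h2]
        _ = E' ∘L (S ∘L S'.adjoint) ∘L E'.adjoint := by
            rw [ContinuousLinearMap.comp_assoc, ContinuousLinearMap.comp_assoc]
        _ = E' ∘L E'.adjoint := by rw [h3]; simp only [ContinuousLinearMap.one_def, ContinuousLinearMap.id_comp]
    calc J ∘L ((E ∘L E.adjoint) - 1) ∘L J'.adjoint
        = J ∘L E ∘L E.adjoint ∘L J'.adjoint - J ∘L J'.adjoint := by
          rw [ContinuousLinearMap.sub_comp, ContinuousLinearMap.comp_sub,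
            ContinuousLinearMap.comp_assoc]
          simp only [ContinuousLinearMap.one_def, ContinuousLinearMap.id_comp]
      _ = (E' ∘L E'.adjoint) - 1 := by rw [hJE, h4]
  have hop : χ ∘L J ∘L ((E ∘L E.adjoint) - 1) ∘L J'.adjoint ∘L χ₁
      = χ ∘L ((E' ∘L E'.adjoint) - 1) ∘L χ₁ := by
    rw [← key]; simp [ContinuousLinearMap.comp_assoc]
  rw [hop]
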